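/- Let (X, π) be a compact Hausdorff pretopological space, f : (X, π) → Y a strongly irreducible surjection with cover-compact fibers, and σ the θ-quotient pretopology on Y. Then f : (X, π) → (Y, rσ) is continuous and (Y, σ) is PHC (i.e., (Y, rσ) is compact). -/
import Mathlib


open Set Filter

/-- A pretopological space: a vicinity filter at each point containing the point. -/
structure Pretop (X : Type*) where
  V : X → Filter X
  pure_le : ∀ x : X, (pure x : Filter X) ≤ V x

/-- Two filters meet (`F # G`). -/
def Meets {X : Type*} (F G : Filter X) : Prop :=
  ∀ A ∈ F, ∀ B ∈ G, (A ∩ B).Nonempty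

namespace Pretop

variable {X Y : Type*} (π : Pretop X)

/-- Convergence: `F → x` iff `F ⊇ V x`. -/
def Conv (F : Filter X) (x : X) : Prop := F ≤ π.V x

/-- Adherence of a filter. -/
def adh (F : Filter X) : Set X := {x | Meets (π.V x) F}

/-- Adherence of a set (adherence of its principal filter). -/
def adhS (A : Set X) : Set X := {x | ∀ U ∈ π.V x, (U ∩ A).Nonempty}

/-- Inherence of a set. -/
def inh (A : Set X) : Set X := (π.adhS Aᶜ)ᶜ

/-- A compact pretopological space: every proper filter has nonempty adherence. -/
def IsCompactPre : Prop := ∀ F : Filter X, F.NeBot → (π.adh F).Nonempty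

/-- Hausdorff: distinct points have disjoint vicinities. -/
def HausdorffPre : Prop :=
  ∀ x y : X, x ≠ y → ∃ U ∈ π.V x, ∃ W ∈ π.V y, U ∩ W = ∅

/-- `F` is compact at `A`: every filter meeting `F` has adherence meeting `A`. -/
def CompactAt (F : Filter X) (A : Set X) : Prop :=
  ∀ G : Filter X, Meets G F → (π.adh G ∩ A).Nonempty

/-- A cover of `A`: every point of `A` has a member of `C` as a vicinity. -/
def IsCover (C : Set (Set X)) (A : Set X) : Prop :=
  ∀ x ∈ A, ∃ U ∈ C, U ∈ π.V x

/-- Cover-compactness. -/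
def CoverCompact (A : Set X) : Prop :=
  ∀ C : Set (Set X), π.IsCover C A →
    ∃ D : Finset (Set X), ↑D ⊆ C ∧ A ⊆ π.inh (⋃ U ∈ D, U)

lemma mem_of_vicinity {x : X} {U : Set X} (h : U ∈ π.V x) : x ∈ U := π.pure_le x h

lemma subset_adhS (A : Set X) : A ⊆ π.adhS A :=
  fun x hx U hU => ⟨x, π.mem_of_vicinity hU, hx⟩

lemma adhS_mono {A B : Set X} (h : A ⊆ B) : π.adhS A ⊆ π.adhS B :=
  fun x hx U hU => (hx U hU).imp fun y hy => ⟨hy.1, h hy.2⟩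

lemma adhS_empty : π.adhS (∅ : Set X) = ∅ := by
  ext x
  simp only [adhS, mem_setOf_eq, Set.inter_empty, Set.mem_empty_iff_false, iff_false]
  intro h
  simpa using h univ univ_mem

lemma adhS_union (A B : Set X) : π.adhS (A ∪ B) = π.adhS A ∪ π.adhS B := by
  apply Subset.antisymm
  · intro x hx
    by_contra hc
    simp only [Set.mem_union, not_or] at hc
    obtain ⟨h1, h2⟩ := hc
    simp only [adhS, mem_setOf_eq, not_forall] at h1 h2
    obtain ⟨U, hU, hUA⟩ := h1
    obtain ⟨W, hW, hWB⟩ := h2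
    obtain ⟨z, hz⟩ := hx (U ∩ W) (inter_mem hU hW)
    rcases hz.2 with hA | hB
    · exact hUA ⟨z, hz.1.1, hA⟩
    · exact hWB ⟨z, hz.1.2, hB⟩
  · exact Set.union_subset (π.adhS_mono Set.subset_union_left)
      (π.adhS_mono Set.subset_union_right)

lemma inh_mono {A B : Set X} (h : A ⊆ B) : π.inh A ⊆ π.inh B :=
  Set.compl_subset_compl.mpr (π.adhS_mono (Set.compl_subset_compl.mpr h))

lemma inh_inter (A B : Set X) : π.inh (A ∩ B) = π.inh A ∩ π.inh B := by
  simp only [inh, Set.compl_inter, adhS_union, Set.compl_union]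

lemma inh_univ : π.inh (univ : Set X) = univ := by
  simp [inh, adhS_empty]

lemma inh_subset (A : Set X) : π.inh A ⊆ A := by
  intro x hx
  by_contra hxA
  exact hx (π.subset_adhS Aᶜ hxA)

/-- The filter `F¹` of members of `F` whose inherence also belongs to `F`. -/
def F1 (F : Filter X) : Filter X where
  sets := {A | A ∈ F ∧ π.inh A ∈ F}
  univ_sets := ⟨univ_mem, by rw [π.inh_univ]; exact univ_mem⟩
  sets_of_superset := fun hA hAB =>
    ⟨mem_of_superset hA.1 hAB, mem_of_superset hA.2 (π.inh_mono hAB)⟩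
  inter_sets := fun hA hB =>
    ⟨inter_mem hA.1 hB.1, by rw [π.inh_inter]; exact inter_mem hA.2 hB.2⟩

lemma mem_F1 {F : Filter X} {A : Set X} : A ∈ π.F1 F ↔ A ∈ F ∧ π.inh A ∈ F := Iff.rfl

/-- The partial regularization `rπ`: vicinities generated by adherences of vicinities. -/
def rpre : Pretop X where
  V x := (π.V x).lift' π.adhS
  pure_le x := le_lift'.mpr fun U hU =>
    mem_pure.mpr (π.subset_adhS U (π.mem_of_vicinity hU))

lemma mem_rpre {x : X} {A : Set X} :
    A ∈ (π.rpre).V x ↔ ∃ U ∈ π.V x, π.adhS U ⊆ A :=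
  mem_lift'_sets fun _ _ h => π.adhS_mono h

end Pretop

/-- Continuity of maps between pretopological spaces. -/
def ContPre {X Y : Type*} (π : Pretop X) (τ : Pretop Y) (f : X → Y) : Prop :=
  ∀ x : X, ∀ W ∈ τ.V (f x), ∃ U ∈ π.V x, f '' U ⊆ W

/-- Perfect maps between pretopological spaces. -/
def PerfectPre {X Y : Type*} (π : Pretop X) (τ : Pretop Y) (f : X → Y) : Prop :=
  ∀ (F : Filter Y) (y : Y), τ.Conv F y → π.CompactAt (F.comap f) (f ⁻¹' {y})

/-- The filter of vicinities of a set `A`. -/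
def VSet {X : Type*} (π : Pretop X) (A : Set X) : Filter X where
  sets := {V | A ⊆ π.inh V}
  univ_sets := by simp [π.inh_univ]
  sets_of_superset := fun h hsub => h.trans (π.inh_mono hsub)
  inter_sets := fun h1 h2 => by
    rw [Set.mem_setOf_eq, π.inh_inter]; exact Set.subset_inter h1 h2

lemma mem_VSet {X : Type*} {π : Pretop X} {A V : Set X} :
    V ∈ VSet π A ↔ A ⊆ π.inh V := Iff.rfl

/-- `f^#[A] = {y : f⁻¹(y) ⊆ A}`. -/
def fsharp {X Y : Type*} (f : X → Y) (A : Set X) : Set Y := {y | f ⁻¹' {y} ⊆ A}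

/-- The θ-quotient pretopology on `Y`. -/
def thetaQuot {X Y : Type*} (π : Pretop X) (f : X → Y) : Pretop Y where
  V y := (VSet π (f ⁻¹' {y})).lift' (fsharp f)
  pure_le y := le_lift'.mpr fun V hV =>
    mem_pure.mpr (fun x hx => π.inh_subset V ((mem_VSet.mp hV) hx))

/-- Strong irreducibility. -/
def StronglyIrreducible {X Y : Type*} (π : Pretop X) (f : X → Y) : Prop :=
  ∀ U V : Set X, (π.inh U).Nonempty → (π.inh V).Nonempty → (U ∩ V).Nonempty →
    ∃ y : Y, f ⁻¹' {y} ⊆ U ∩ V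

/-- The simple extension `Y⁺` determined by a dense subset `S`. -/
def extPlus {X : Type*} (ρ : Pretop X) (S : Set X) : Pretop X where
  V p := (ρ.V p).lift' (fun W => insert p (W ∩ S))
  pure_le p := le_lift'.mpr fun W _ => mem_pure.mpr (Set.mem_insert p _)

/-- `o(A) = {p : ∃ W ∈ V(p), W ∩ S = A}`. -/
def oSet {X : Type*} (ρ : Pretop X) (S : Set X) (A : Set X) : Set X :=
  {p | ∃ W ∈ ρ.V p, W ∩ S = A}

/-- The strict extension `Y^#` determined by a dense subset `S`. -/
def extSharp {X : Type*} (ρ : Pretop X) (S : Set X) : Pretop X where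
  V p := (ρ.V p).lift' (fun W => oSet ρ S (W ∩ S))
  pure_le p := le_lift'.mpr fun W hW => mem_pure.mpr ⟨W, hW, rfl⟩

/-- The θ-pretopology of a topological space: vicinities are closed neighborhoods. -/
def theta (X : Type*) [TopologicalSpace X] : Pretop X where
  V x := (nhds x).lift' closure
  pure_le x := le_lift'.mpr fun U hU =>
    mem_pure.mpr (subset_closure (mem_of_mem_nhds hU))

section Auxiliary

variable {X Y : Type*} (π : Pretop X)

lemma mem_inh_iff {x : X} {V : Set X} : x ∈ π.inh V ↔ V ∈ π.V x := by
  simp only [Pretop.inh, Set.mem_compl_iff, Pretop.adhS, Set.mem_setOf_eq]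
  push_neg
  constructor
  · rintro ⟨U, hU, hne⟩
    refine Filter.mem_of_superset hU fun a ha => ?_
    by_contra h
    have : a ∈ U ∩ Vᶜ := ⟨ha, h⟩
    rw [hne] at this
    exact this
  · intro hV
    exact ⟨V, hV, by simp⟩

lemma fsharp_mono {f : X → Y} : Monotone (fsharp f) :=
  fun A B h y hy => hy.trans h

lemma mem_thetaQuot {f : X → Y} {y : Y} {W : Set Y} :
    W ∈ (thetaQuot π f).V y ↔ ∃ V : Set X, f ⁻¹' {y} ⊆ π.inh V ∧ fsharp f V ⊆ W := by
  rw [show (thetaQuot π f).V y = (VSet π (f ⁻¹' {y})).lift' (fsharp f) from rfl,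
    mem_lift'_sets fsharp_mono]
  simp only [mem_VSet]

/-- Key lemma from strong irreducibility: the image of `V` lies in the
σ-adherence of `f^#[V]`. -/
lemma key_adh {f : X → Y} (hirr : StronglyIrreducible π f)
    {V : Set X} (hne : (π.inh V).Nonempty) {z : X} (hz : z ∈ V) :
    f z ∈ (thetaQuot π f).adhS (fsharp f V) := by
  intro W hW
  obtain ⟨V', hV', hsub⟩ := (mem_thetaQuot π).mp hW
  have hzfib : z ∈ f ⁻¹' {f z} := rfl
  have hzV' : z ∈ V' := π.inh_subset V' (hV' hzfib)
  obtain ⟨y', hy'⟩ := hirr V V' hne ⟨z, hV' hzfib⟩ ⟨z, hz, hzV'⟩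
  exact ⟨y', hsub fun a ha => (hy' ha).2, fun a ha => (hy' ha).1⟩

lemma inh_biInter_finset {ι : Type*} (D : Finset ι) (g : ι → Set X) {B : Set X}
    (h : ∀ i ∈ D, B ⊆ π.inh (g i)) : B ⊆ π.inh (⋂ i ∈ D, g i) := by
  classical
  induction D using Finset.induction with
  | empty => simp [π.inh_univ]
  | @insert a s ha ih =>
      rw [Finset.set_biInter_insert, π.inh_inter]
      exact Set.subset_inter (h a (Finset.mem_insert_self a s))
        (ih fun i hi => h i (Finset.mem_insert_of_mem hi))

/-- Separation of disjoint cover-compact sets in a Hausdorff pretopological space. -/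
lemma separate_coverCompact (hH : π.HausdorffPre) {A B : Set X}
    (hA : π.CoverCompact A) (hB : π.CoverCompact B)
    (hd : ∀ x ∈ A, ∀ z ∈ B, x ≠ z) :
    ∃ U W : Set X, A ⊆ π.inh U ∧ B ⊆ π.inh W ∧ U ∩ W = ∅ := by
  classical
  -- Step 1: each x ∈ A has a vicinity disjoint from a set whose inherence contains B
  have step1 : ∀ x ∈ A, ∃ U ∈ π.V x, ∃ W, B ⊆ π.inh W ∧ U ∩ W = ∅ := by
    intro x hx
    have hcov : π.IsCover {W | ∃ U ∈ π.V x, U ∩ W = ∅} B := by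
      intro z hz
      obtain ⟨U, hU, W, hW, hUW⟩ := hH x z (hd x hx z hz)
      exact ⟨W, ⟨U, hU, hUW⟩, hW⟩
    obtain ⟨D, hDC, hBD⟩ := hB _ hcov
    have hch : ∀ W : Set X, ∃ U : Set X,
        W ∈ ({W | ∃ U ∈ π.V x, U ∩ W = ∅} : Set (Set X)) →
          U ∈ π.V x ∧ U ∩ W = ∅ := by
      intro W
      by_cases h : W ∈ ({W | ∃ U ∈ π.V x, U ∩ W = ∅} : Set (Set X))
      · obtain ⟨U, hU, hUW⟩ := h
        exact ⟨U, fun _ => ⟨hU, hUW⟩⟩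
      · exact ⟨univ, fun h' => absurd h' h⟩
    choose u hu using hch
    refine ⟨⋂ W ∈ D, u W, ?_, ⋃ W ∈ D, W, hBD, ?_⟩
    · exact (Filter.biInter_finset_mem D).mpr fun W hW => (hu W (hDC hW)).1
    · ext a
      simp only [Set.mem_inter_iff, Set.mem_iInter, Set.mem_iUnion,
        Set.mem_empty_iff_false, iff_false, not_and]
      rintro h1 ⟨W, hW, haW⟩
      have := (hu W (hDC hW)).2
      exact absurd (Set.mem_inter (h1 W hW) haW) (by rw [this]; exact notMem_empty a)
  -- Step 2: cover A by such vicinities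
  have hcov : π.IsCover {U | ∃ W, B ⊆ π.inh W ∧ U ∩ W = ∅} A := by
    intro x hx
    obtain ⟨U, hU, W, hW, hUW⟩ := step1 x hx
    exact ⟨U, ⟨W, hW, hUW⟩, hU⟩
  obtain ⟨D, hDC, hAD⟩ := hA _ hcov
  have hch : ∀ U : Set X, ∃ W : Set X,
      U ∈ ({U | ∃ W, B ⊆ π.inh W ∧ U ∩ W = ∅} : Set (Set X)) →
        B ⊆ π.inh W ∧ U ∩ W = ∅ := by
    intro U
    by_cases h : U ∈ ({U | ∃ W, B ⊆ π.inh W ∧ U ∩ W = ∅} : Set (Set X))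
    · obtain ⟨W, hW, hUW⟩ := h
      exact ⟨W, fun _ => ⟨hW, hUW⟩⟩
    · exact ⟨univ, fun h' => absurd h' h⟩
  choose w hw using hch
  refine ⟨⋃ U ∈ D, U, ⋂ U ∈ D, w U, hAD, ?_, ?_⟩
  · exact inh_biInter_finset π D w fun U hU => (hw U (hDC hU)).1
  · ext a
    simp only [Set.mem_inter_iff, Set.mem_iUnion, Set.mem_iInter,
      Set.mem_empty_iff_false, iff_false, not_and]
    rintro ⟨U, hU, haU⟩ h2
    have := (hw U (hDC hU)).2
    exact absurd (Set.mem_inter haU (h2 U hU)) (by rw [this]; exact notMem_empty a)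

end Auxiliary

/-- If `(X, π)` is compact Hausdorff and `f` is a strongly irreducible surjection with
cover-compact fibers, then `f : (X, π) → (Y, σ)` is w-θ-continuous (continuous into
`rσ`) and `(Y, σ)` is PHC. -/
theorem thetaQuot_phc {X Y : Type*} (π : Pretop X) (f : X → Y)
    (hc : π.IsCompactPre) (hH : π.HausdorffPre) (hs : Function.Surjective f)
    (hirr : StronglyIrreducible π f)
    (hfib : ∀ y : Y, π.CoverCompact (f ⁻¹' {y})) :
    ContPre π ((thetaQuot π f).rpre) f ∧
    (thetaQuot π f).HausdorffPre ∧
    ((thetaQuot π f).rpre).IsCompactPre := by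
  refine ⟨?_, ?_, ?_⟩
  · -- continuity into rσ
    intro x A hA
    obtain ⟨W, hW, hWA⟩ := (Pretop.mem_rpre _).mp hA
    obtain ⟨V, hV, hVW⟩ := (mem_thetaQuot π).mp hW
    have hxfib : x ∈ f ⁻¹' {f x} := rfl
    refine ⟨V, (mem_inh_iff π).mp (hV hxfib), ?_⟩
    rintro _ ⟨z, hz, rfl⟩
    exact hWA ((thetaQuot π f).adhS_mono hVW (key_adh π hirr ⟨x, hV hxfib⟩ hz))
  · -- Hausdorff of σ
    intro y₁ y₂ hne
    have hd : ∀ x ∈ f ⁻¹' {y₁}, ∀ z ∈ f ⁻¹' {y₂}, x ≠ z := by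
      rintro x hx z hz rfl
      exact hne (hx.symm.trans hz)
    obtain ⟨U, W, hU, hW, hUW⟩ :=
      separate_coverCompact π hH (hfib y₁) (hfib y₂) hd
    refine ⟨fsharp f U, (mem_thetaQuot π).mpr ⟨U, hU, subset_rfl⟩,
      fsharp f W, (mem_thetaQuot π).mpr ⟨W, hW, subset_rfl⟩, ?_⟩
    ext y
    simp only [Set.mem_inter_iff, Set.mem_empty_iff_false, iff_false, not_and]
    intro h1 h2
    obtain ⟨x, hx⟩ := hs y
    have : x ∈ U ∩ W := ⟨h1 (by simp [hx]), h2 (by simp [hx])⟩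
    rw [hUW] at this
    exact this
  · -- compactness of rσ
    intro G hG
    have hcne : (G.comap f).NeBot :=
      Filter.comap_neBot fun t ht => by
        obtain ⟨y, hy⟩ := G.nonempty_of_mem ht
        obtain ⟨x, hx⟩ := hs y
        exact ⟨x, by rwa [hx]⟩
    obtain ⟨x, hx⟩ := hc (G.comap f) hcne
    refine ⟨f x, ?_⟩
    intro A hA B hB
    obtain ⟨W, hW, hWA⟩ := (Pretop.mem_rpre _).mp hA
    obtain ⟨V, hV, hVW⟩ := (mem_thetaQuot π).mp hW
    have hxfib : x ∈ f ⁻¹' {f x} := rfl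
    have hVx : V ∈ π.V x := (mem_inh_iff π).mp (hV hxfib)
    obtain ⟨z, hzV, hzB⟩ := hx V hVx (f ⁻¹' B) (Filter.preimage_mem_comap hB)
    refine ⟨f z, ?_, hzB⟩
    exact hWA ((thetaQuot π f).adhS_mono hVW (key_adh π hirr ⟨x, hV hxfib⟩ hzV))
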